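/- Let Φ be of type A_n with l = n+1 and let ν be a weight of the weight lattice. If lν = (n+1)ν can be written as a sum of distinct positive roots of Φ, then ν = ϖ_i for some fundamental weight ϖ_i (0 ≤ i ≤ n, with ϖ_0 = 0). Conversely, (n+1)ϖ_i is a sum of distinct positive roots for every 0 ≤ i ≤ n (namely, the sum of all positive roots containing α_i). -/

import Mathlib

set_option maxRecDepth 8000


/-- The Cartan matrix of type `A_n` (entries `⟨α_t, α_k^∨⟩`). -/
def cartanA (n : ℕ) (k t : Fin n) : ℤ :=
  if k = t then 2 else if (k : ℕ) + 1 = (t : ℕ) ∨ (t : ℕ) + 1 = (k : ℕ) then -1 else 0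

/-- The positive root `α_{p.1} + ⋯ + α_{p.2}` of type `A_n` (for `p.1 ≤ p.2`), written in
fundamental-weight coordinates, i.e. its pairings with the simple coroots. -/
def posRootA (n : ℕ) (p : Fin n × Fin n) : Fin n → ℤ :=
  fun k => ∑ t ∈ Finset.Icc p.1 p.2, cartanA n k t

/-- `μ` is a sum of pairwise distinct positive roots of `A_n` (positive roots are in
bijection with pairs `p.1 ≤ p.2`). -/
def IsSumOfDistinctPosRootsA (n : ℕ) (μ : Fin n → ℤ) : Prop :=
  ∃ S : Finset (Fin n × Fin n), (∀ p ∈ S, p.1 ≤ p.2) ∧ μ = ∑ p ∈ S, posRootA n p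

/-- Auxiliary "edge" function: `cartanA n k t = Faux k t - Faux k (t+1)`. -/
def Faux (k x : ℕ) : ℤ := (if x = k then 1 else 0) - (if x = k + 1 then 1 else 0)

lemma cartan_eq (n : ℕ) (k t : Fin n) :
    cartanA n k t = Faux k t - Faux k ((t : ℕ) + 1) := by
  simp only [cartanA, Faux, Fin.ext_iff]
  split_ifs <;> omega

lemma telescope_aux (f : ℕ → ℤ) (a b : ℕ) (h : a ≤ b) :
    ∑ x ∈ Finset.Icc a b, (f x - f (x + 1)) = f a - f (b + 1) := by
  induction b with
  | zero => interval_cases a; simp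
  | succ b ih =>
    rcases Nat.lt_or_ge a (b + 1) with h' | h'
    · rw [Finset.sum_Icc_succ_top (by omega), ih (by omega)]; ring
    · have : a = b + 1 := le_antisymm h h'
      subst this; simp

lemma posRoot_eq (n : ℕ) (k : Fin n) (p : Fin n × Fin n) (h : p.1 ≤ p.2) :
    posRootA n p k = Faux k p.1 - Faux k ((p.2 : ℕ) + 1) := by
  unfold posRootA
  calc ∑ t ∈ Finset.Icc p.1 p.2, cartanA n k t
      = ∑ t ∈ Finset.Icc p.1 p.2, (Faux k t - Faux k ((t : ℕ) + 1)) :=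
        Finset.sum_congr rfl fun t _ => cartan_eq n k t
    _ = ∑ x ∈ Finset.Icc (p.1 : ℕ) (p.2 : ℕ), (Faux k x - Faux k (x + 1)) := by
        rw [← Fin.map_valEmbedding_Icc, Finset.sum_map]; rfl
    _ = Faux k p.1 - Faux k ((p.2 : ℕ) + 1) := telescope_aux _ _ _ h

/-- Slope function of a family of positive roots. -/
def gfun {n : ℕ} (S : Finset (Fin n × Fin n)) (t : ℕ) : ℤ :=
  ((S.filter (fun p => (p.1 : ℕ) = t)).card : ℤ) -
    ((S.filter (fun p => (p.2 : ℕ) + 1 = t)).card : ℤ)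

lemma sum_posRoot {n : ℕ} (S : Finset (Fin n × Fin n)) (hS : ∀ p ∈ S, p.1 ≤ p.2) (k : Fin n) :
    ∑ p ∈ S, posRootA n p k = gfun S k - gfun S ((k : ℕ) + 1) := by
  have h1 : ∑ p ∈ S, posRootA n p k
      = ∑ p ∈ S, (Faux k p.1 - Faux k ((p.2 : ℕ) + 1)) :=
    Finset.sum_congr rfl fun p hp => posRoot_eq n k p (hS p hp)
  rw [h1]
  simp only [Faux, gfun, Finset.sum_sub_distrib, Finset.sum_boole]
  ring

lemma cnt1_le {n : ℕ} (S : Finset (Fin n × Fin n)) (hS : ∀ p ∈ S, p.1 ≤ p.2) (t : ℕ) :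
    (S.filter (fun p => (p.1 : ℕ) = t)).card ≤ n - t := by
  rcases Nat.lt_or_ge t n with ht | ht
  · have := Finset.card_le_card_of_injOn (f := Prod.snd)
      (s := S.filter (fun p => (p.1 : ℕ) = t)) (t := Finset.Ici (⟨t, ht⟩ : Fin n))
      (fun p hp => by
        simp only [Finset.coe_filter, Set.mem_setOf_eq] at hp
        simp only [Finset.mem_coe, Finset.mem_Ici]
        exact le_trans (by simp [Fin.le_def, hp.2]) (hS p hp.1))
      (fun p hp q hq hpq => by
        simp only [Finset.coe_filter, Set.mem_setOf_eq] at hp hq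
        exact Prod.ext (Fin.ext (hp.2.trans hq.2.symm)) hpq)
    simpa [Fin.card_Ici] using this
  · have : S.filter (fun p => (p.1 : ℕ) = t) = ∅ := by
      apply Finset.filter_false_of_mem
      intro p _
      have := p.1.isLt
      omega
    simp [this]

lemma cnt2_le {n : ℕ} (S : Finset (Fin n × Fin n)) (hS : ∀ p ∈ S, p.1 ≤ p.2) (t : ℕ) :
    (S.filter (fun p => (p.2 : ℕ) + 1 = t)).card ≤ t := by
  rcases Nat.eq_zero_or_pos t with rfl | ht
  · simp
  rcases Nat.lt_or_ge (t - 1) n with htn | htn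
  · have := Finset.card_le_card_of_injOn (f := Prod.fst)
      (s := S.filter (fun p => (p.2 : ℕ) + 1 = t)) (t := Finset.Iic (⟨t - 1, htn⟩ : Fin n))
      (fun p hp => by
        simp only [Finset.coe_filter, Set.mem_setOf_eq] at hp
        simp only [Finset.mem_coe, Finset.mem_Iic]
        refine le_trans (hS p hp.1) ?_
        simp only [Fin.le_def]
        omega)
      (fun p hp q hq hpq => by
        simp only [Finset.coe_filter, Set.mem_setOf_eq] at hp hq
        exact Prod.ext hpq (Fin.ext (by omega)))
    simp only [Fin.card_Iic] at this
    omega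
  · have : S.filter (fun p => (p.2 : ℕ) + 1 = t) = ∅ := by
      apply Finset.filter_false_of_mem
      intro p _
      have := p.2.isLt
      omega
    simp [this]

lemma gfun_bounds {n : ℕ} (S : Finset (Fin n × Fin n)) (hS : ∀ p ∈ S, p.1 ≤ p.2)
    (t : ℕ) (ht : t ≤ n) : -(t : ℤ) ≤ gfun S t ∧ gfun S t ≤ (n : ℤ) - t := by
  have h1 := (Nat.cast_le (α := ℤ)).mpr (cnt1_le S hS t)
  have h2 := (Nat.cast_le (α := ℤ)).mpr (cnt2_le S hS t)
  unfold gfun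
  push_cast at h1 h2 ⊢
  omega

lemma uniq_mod (N b x m : ℤ) (hN : 0 < N) (hx : x = b + N * m) (h1 : b - N < x)
    (h2 : x < b + N) : x = b := by
  have hm : m = 0 := by
    rcases lt_trichotomy m 0 with h | h | h
    · have : N * m ≤ N * (-1) := mul_le_mul_of_nonneg_left (by omega) hN.le
      omega
    · exact h
    · have : N * 1 ≤ N * m := mul_le_mul_of_nonneg_left (by omega) hN.le
      omega
  subst hm
  simp at hx
  omega

lemma forward_aux (n : ℕ) (hn : 1 ≤ n) (ν : Fin n → ℤ) (g : ℕ → ℤ)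
    (hb : ∀ t ≤ n, -(t : ℤ) ≤ g t ∧ g t ≤ (n : ℤ) - t)
    (hrec : ∀ k : Fin n, ((n : ℤ) + 1) * ν k = g (k : ℕ) - g ((k : ℕ) + 1)) :
    ν = 0 ∨ ∃ i : Fin n, ν = Pi.single i 1 := by
  set a := g 0 with ha
  have ha0 : 0 ≤ a := by simpa using (hb 0 (by omega)).1
  have han : a ≤ (n : ℤ) := by simpa using (hb 0 (by omega)).2
  have hT : ∀ t, t ≤ n → g t = (if a + (t : ℤ) ≤ (n : ℤ) then a else a - ((n : ℤ) + 1)) := by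
    intro t
    induction t with
    | zero =>
      intro _
      rw [if_pos (by push_cast; omega)]
    | succ t ih =>
      intro ht
      have hgt := ih (by omega)
      have hlt : t < n := ht
      have hr := hrec ⟨t, hlt⟩
      have hb1 := hb (t + 1) ht
      push_cast at hb1 ⊢
      by_cases hc : a + ((t : ℤ) + 1) ≤ (n : ℤ)
      · rw [if_pos hc]
        rw [if_pos (by omega)] at hgt
        exact uniq_mod ((n : ℤ) + 1) a (g (t + 1)) (-(ν ⟨t, hlt⟩)) (by omega)
          (by linear_combination hr + hgt) (by omega) (by omega)
      · rw [if_neg hc]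
        by_cases hc' : a + (t : ℤ) ≤ (n : ℤ)
        · rw [if_pos hc'] at hgt
          exact uniq_mod ((n : ℤ) + 1) (a - ((n : ℤ) + 1)) (g (t + 1)) (1 - ν ⟨t, hlt⟩)
            (by omega) (by linear_combination hr + hgt) (by omega) (by omega)
        · rw [if_neg hc'] at hgt
          exact uniq_mod ((n : ℤ) + 1) (a - ((n : ℤ) + 1)) (g (t + 1)) (-(ν ⟨t, hlt⟩))
            (by omega) (by linear_combination hr + hgt) (by omega) (by omega)
  have hne : ((n : ℤ) + 1) ≠ 0 := by positivity
  have key : ∀ k : Fin n, ((n : ℤ) + 1) * ν k =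
      (if a + (k : ℤ) ≤ (n : ℤ) then a else a - ((n : ℤ) + 1)) -
      (if a + (k : ℤ) + 1 ≤ (n : ℤ) then a else a - ((n : ℤ) + 1)) := by
    intro k
    have h1 := hT k (le_of_lt k.isLt)
    have h2 := hT ((k : ℕ) + 1) k.isLt
    push_cast at h2
    rw [hrec k, h1, h2]
    ring_nf
  by_cases haz : a = 0
  · left
    funext k
    have hk := key k
    have hkn : (k : ℕ) < n := k.isLt
    rw [if_pos (by omega), if_pos (by omega), sub_self] at hk
    have := mul_eq_zero.mp hk
    simpa [hne] using this
  · right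
    have ha1 : 1 ≤ a := by omega
    refine ⟨⟨n - a.toNat, by omega⟩, ?_⟩
    funext k
    have hk := key k
    have hkn : (k : ℕ) < n := k.isLt
    rw [Pi.single_apply]
    have hAval : (a.toNat : ℤ) = a := Int.toNat_of_nonneg ha0
    by_cases hki : k = (⟨n - a.toNat, by omega⟩ : Fin n)
    · rw [if_pos hki]
      have hkv : (k : ℕ) = n - a.toNat := by rw [hki]
      have hc1 : a + (k : ℤ) ≤ (n : ℤ) := by
        have : ((k : ℕ) : ℤ) = (n : ℤ) - a := by
          rw [hkv]; omega
        omega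
      have hc2 : ¬ (a + (k : ℤ) + 1 ≤ (n : ℤ)) := by
        have : ((k : ℕ) : ℤ) = (n : ℤ) - a := by
          rw [hkv]; omega
        omega
      rw [if_pos hc1, if_neg hc2] at hk
      have : ((n : ℤ) + 1) * ν k = ((n : ℤ) + 1) * 1 := by rw [hk]; ring
      exact mul_left_cancel₀ hne this
    · rw [if_neg hki]
      have hkv : (k : ℕ) ≠ n - a.toNat := fun h => hki (Fin.ext h)
      have hka : ((k : ℤ)) ≠ (n : ℤ) - a := by
        intro h
        apply hkv
        omega
      rcases lt_or_gt_of_ne hka with h | h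
      · rw [if_pos (by omega), if_pos (by omega), sub_self] at hk
        have := mul_eq_zero.mp hk
        simpa [hne] using this
      · rw [if_neg (by omega), if_neg (by omega), sub_self] at hk
        have := mul_eq_zero.mp hk
        simpa [hne] using this

theorem stmt_6 (n : ℕ) (hn : 1 ≤ n) (ν : Fin n → ℤ) :
    IsSumOfDistinctPosRootsA n (((n : ℤ) + 1) • ν) ↔
      (ν = 0 ∨ ∃ i : Fin n, ν = Pi.single i 1) := by
  constructor
  · rintro ⟨S, hS, hsum⟩
    apply forward_aux n hn ν (gfun S)
    · exact fun t ht => gfun_bounds S hS t ht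
    · intro k
      have := congrFun hsum k
      rw [Pi.smul_apply, smul_eq_mul] at this
      rw [this, Finset.sum_apply, sum_posRoot S hS k]
  · rintro (rfl | ⟨i, rfl⟩)
    · exact ⟨∅, by simp, by simp⟩
    · refine ⟨Finset.Iic i ×ˢ Finset.Ici i, ?_, ?_⟩
      · rintro ⟨s, e⟩ hp
        rw [Finset.mem_product] at hp
        exact le_trans (Finset.mem_Iic.mp hp.1) (Finset.mem_Ici.mp hp.2)
      · funext k
        rw [Pi.smul_apply, smul_eq_mul, Pi.single_apply, Finset.sum_apply]
        have hroot : ∀ p ∈ Finset.Iic i ×ˢ Finset.Ici i,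
            posRootA n p k = Faux k p.1 - Faux k ((p.2 : ℕ) + 1) := by
          intro p hp
          rw [Finset.mem_product] at hp
          exact posRoot_eq n k p
            (le_trans (Finset.mem_Iic.mp hp.1) (Finset.mem_Ici.mp hp.2))
        rw [Finset.sum_congr rfl hroot, Finset.sum_product]
        have h1 : ∑ s ∈ Finset.Iic i, (if (s : ℕ) = (k : ℕ) then (1 : ℤ) else 0)
            = if (k : ℕ) ≤ (i : ℕ) then 1 else 0 := by
          simp only [← Fin.ext_iff]
          rw [Finset.sum_ite_eq' (Finset.Iic i) k (fun _ => (1 : ℤ))]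
          by_cases hk : (k : ℕ) ≤ (i : ℕ)
          · rw [if_pos (Finset.mem_Iic.mpr (Fin.le_def.mpr hk)), if_pos hk]
          · rw [if_neg (fun hm => hk (Fin.le_def.mp (Finset.mem_Iic.mp hm))), if_neg hk]
        have h2 : ∑ s ∈ Finset.Iic i, (if (s : ℕ) = (k : ℕ) + 1 then (1 : ℤ) else 0)
            = if (k : ℕ) + 1 ≤ (i : ℕ) then 1 else 0 := by
          by_cases h : (k : ℕ) + 1 ≤ (i : ℕ)
          · have hlt : (k : ℕ) + 1 < n := lt_of_le_of_lt h i.isLt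
            rw [if_pos h]
            have hcond : ∀ s : Fin n, ((s : ℕ) = (k : ℕ) + 1) ↔ s = ⟨(k : ℕ) + 1, hlt⟩ := by
              intro s; simp [Fin.ext_iff]
            simp only [hcond]
            rw [Finset.sum_ite_eq' (Finset.Iic i) _ (fun _ => (1 : ℤ))]
            rw [if_pos (Finset.mem_Iic.mpr (by simp [Fin.le_def]; omega))]
          · rw [if_neg h, Finset.sum_eq_zero]
            intro s hs
            rw [if_neg]
            have := Finset.mem_Iic.mp hs
            rw [Fin.le_def] at this
            omega
        have h3 : ∑ e ∈ Finset.Ici i, (if (e : ℕ) + 1 = (k : ℕ) then (1 : ℤ) else 0)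
            = if (i : ℕ) + 1 ≤ (k : ℕ) then 1 else 0 := by
          by_cases h : (i : ℕ) + 1 ≤ (k : ℕ)
          · have hlt : (k : ℕ) - 1 < n := by have := k.isLt; omega
            rw [if_pos h]
            have hcond : ∀ e : Fin n, ((e : ℕ) + 1 = (k : ℕ)) ↔ e = ⟨(k : ℕ) - 1, hlt⟩ := by
              intro e; simp [Fin.ext_iff]; omega
            simp only [hcond]
            rw [Finset.sum_ite_eq' (Finset.Ici i) _ (fun _ => (1 : ℤ))]
            rw [if_pos (Finset.mem_Ici.mpr (by simp [Fin.le_def]; omega))]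
          · rw [if_neg h, Finset.sum_eq_zero]
            intro e he
            rw [if_neg]
            have := Finset.mem_Ici.mp he
            rw [Fin.le_def] at this
            omega
        have h4 : ∑ e ∈ Finset.Ici i, (if (e : ℕ) + 1 = (k : ℕ) + 1 then (1 : ℤ) else 0)
            = if (i : ℕ) ≤ (k : ℕ) then 1 else 0 := by
          have hcond : ∀ e : Fin n, ((e : ℕ) + 1 = (k : ℕ) + 1) ↔ e = k := by
            intro e; simp [Fin.ext_iff]
          simp only [hcond]
          rw [Finset.sum_ite_eq' (Finset.Ici i) k (fun _ => (1 : ℤ))]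
          by_cases hk : (i : ℕ) ≤ (k : ℕ)
          · rw [if_pos (Finset.mem_Ici.mpr (Fin.le_def.mpr hk)), if_pos hk]
          · rw [if_neg (fun hm => hk (Fin.le_def.mp (Finset.mem_Ici.mp hm))), if_neg hk]
        have expand : ∑ s ∈ Finset.Iic i, ∑ e ∈ Finset.Ici i,
              (Faux (k : ℕ) (s : ℕ) - Faux (k : ℕ) ((e : ℕ) + 1))
            = ((Finset.Ici i).card : ℤ) * (∑ s ∈ Finset.Iic i, Faux k s)
              - ((Finset.Iic i).card : ℤ) * (∑ e ∈ Finset.Ici i, Faux k ((e : ℕ) + 1)) := by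
          simp only [Finset.sum_sub_distrib, Finset.sum_const, nsmul_eq_mul,
            Finset.mul_sum]
        rw [expand]
        simp only [Faux, Finset.sum_sub_distrib, h1, h2, h3, h4, Fin.card_Ici, Fin.card_Iic,
          Fin.ext_iff]
        have hin : (i : ℕ) ≤ n := le_of_lt i.isLt
        have hkn : (k : ℕ) < n := k.isLt
        push_cast [Nat.cast_sub hin]
        split_ifs <;> ring_nf <;> omega
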